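/- Let ξ > 0 and α > 0, and consider the planar system ẋ = x·(y + (x+1)/ξ), ẏ = y·(y + (x+1)/ξ) with initial condition x(0) = −1−α, y(0) = 2α/ξ. If 0 < α < 1, then the solution is defined and bounded for all t ≥ 0 and converges, as t → ∞, to the point (x, y) = (−(1+α)/(1−α), 2α/(ξ(1−α))). If α ≥ 1, then y is unbounded on the maximal forward interval of existence; i.e., the orbit is bounded in forward time if and only if α < 1. -/

import Mathlib

open Filter Topology

lemma aux_ode1 (ξ α k : ℝ) (hξ : ξ ≠ 0) (t : ℝ)
    (hD : 1 - α + α * Real.exp (-(t/ξ)) ≠ 0) :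
    HasDerivAt (fun s => k / (1 - α + α * Real.exp (-(s/ξ))))
      (k * (α * Real.exp (-(t/ξ)) / ξ) / (1 - α + α * Real.exp (-(t/ξ)))^2) t := by
  have hbase : HasDerivAt (fun s : ℝ => 1 - α + α * Real.exp (-(s/ξ)))
      (α * (Real.exp (-(t/ξ)) * -(1/ξ))) t :=
    ((((hasDerivAt_id t).div_const ξ).neg.exp).const_mul α).const_add (1 - α)
  have h2 := (hbase.inv hD).const_mul k
  simp only [div_eq_mul_inv]
  refine h2.congr_deriv ?_
  field_simp


lemma aux_alg (ξ α k e : ℝ) (hξ : ξ ≠ 0) (he : 1 - α + α * e ≠ 0) :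
    k / (1 - α + α * e) * (2 * α / ξ / (1 - α + α * e) + ((-1 - α) / (1 - α + α * e) + 1) / ξ)
      = k * (α * e / ξ) / (1 - α + α * e) ^ 2 := by
  field_simp
  ring

lemma aux_key (ξ α : ℝ) (hξ : 0 < ξ) (b : EReal) (x y : ℝ → ℝ)
    (hsol : ∀ t : ℝ, 0 ≤ t → (t : EReal) < b →
      HasDerivAt x (x t * (y t + (x t + 1) / ξ)) t ∧
      HasDerivAt y (y t * (y t + (x t + 1) / ξ)) t)
    (hx0 : x 0 = -1 - α) (hy0 : y 0 = 2 * α / ξ)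
    (T : ℝ) (hT0 : 0 ≤ T) (hTb : (T : EReal) < b) :
    0 < 1 - α + α * Real.exp (-(T/ξ)) ∧
    x T = (-1 - α) / (1 - α + α * Real.exp (-(T/ξ))) ∧
    y T = (2 * α / ξ) / (1 - α + α * Real.exp (-(T/ξ))) := by
  have hξ' : ξ ≠ 0 := ne_of_gt hξ
  set g : ℝ → ℝ := fun s => y s + (x s + 1) / ξ with hgdef
  set c : ℝ → ℝ := fun s => min (max s 0) T with hcdef
  have hcmem : ∀ s : ℝ, 0 ≤ c s ∧ (c s : EReal) < b := by
    intro s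
    refine ⟨le_min (le_max_right s 0) hT0, ?_⟩
    exact lt_of_le_of_lt (EReal.coe_le_coe_iff.mpr (min_le_right _ _)) hTb
  have hceq : ∀ s ∈ Set.Icc (0:ℝ) T, c s = s := by
    intro s hs
    simp [hcdef, max_eq_left hs.1, min_eq_left hs.2]
  have hgc : Continuous (g ∘ c) := by
    rw [continuous_iff_continuousAt]
    intro s
    obtain ⟨h1, h2⟩ := hcmem s
    have hx' := (hsol (c s) h1 h2).1
    have hy' := (hsol (c s) h1 h2).2
    have hgat : ContinuousAt g (c s) :=
      hy'.continuousAt.add ((hx'.continuousAt.add continuousAt_const).div_const ξ)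
    exact hgat.comp (((continuous_id.max continuous_const).min continuous_const).continuousAt)
  set G : ℝ → ℝ := fun t => ∫ s in (0:ℝ)..t, (g ∘ c) s with hGdef
  have hG : ∀ t : ℝ, HasDerivAt G ((g ∘ c) t) t := fun t =>
    (hgc.integral_hasStrictDerivAt 0 t).hasDerivAt
  have hG0 : G 0 = 0 := intervalIntegral.integral_same
  have hub : ∀ u ∈ Set.Icc (0:ℝ) T, 0 ≤ u ∧ (u : EReal) < b := fun u hu =>
    ⟨hu.1, lt_of_le_of_lt (EReal.coe_le_coe_iff.mpr hu.2) hTb⟩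
  -- generic constancy of f * exp(-G)
  have hconst : ∀ f : ℝ → ℝ,
      (∀ u : ℝ, 0 ≤ u → (u : EReal) < b → HasDerivAt f (f u * g u) u) →
      ∀ u ∈ Set.Icc (0:ℝ) T, f u * Real.exp (-G u) = f 0 := by
    intro f hf u hu
    have hderiv : ∀ v ∈ Set.Icc (0:ℝ) T,
        HasDerivAt (fun w => f w * Real.exp (-G w)) 0 v := by
      intro v hv
      obtain ⟨h1, h2⟩ := hub v hv
      have hE : HasDerivAt (fun w => Real.exp (-G w)) (Real.exp (-G v) * -((g ∘ c) v)) v :=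
        ((hG v).neg).exp
      have hmul := (hf v h1 h2).mul hE
      have hcv : (g ∘ c) v = g v := by rw [Function.comp_apply, hceq v hv]
      rw [hcv] at hmul
      refine hmul.congr_deriv ?_
      ring
    have hres := constant_of_has_deriv_right_zero
      (fun v hv => (hderiv v hv).continuousAt.continuousWithinAt)
      (fun v hv => (hderiv v (Set.Ico_subset_Icc_self hv)).hasDerivWithinAt) u hu
    rw [hres, hG0]
    simp
  have hxE : ∀ u ∈ Set.Icc (0:ℝ) T, x u * Real.exp (-G u) = -1 - α := by
    intro u hu
    rw [hconst x (fun u h1 h2 => (hsol u h1 h2).1) u hu, hx0]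
  have hyE : ∀ u ∈ Set.Icc (0:ℝ) T, y u * Real.exp (-G u) = 2 * α / ξ := by
    intro u hu
    rw [hconst y (fun u h1 h2 => (hsol u h1 h2).2) u hu, hy0]
  -- the second invariant
  have hB : ∀ u ∈ Set.Icc (0:ℝ) T,
      (Real.exp (-G u) - (1 - α)) * Real.exp (u/ξ) = α := by
    intro u hu
    have hderiv : ∀ v ∈ Set.Icc (0:ℝ) T,
        HasDerivAt (fun w => (Real.exp (-G w) - (1 - α)) * Real.exp (w/ξ)) 0 v := by
      intro v hv
      have hE : HasDerivAt (fun w => Real.exp (-G w) - (1 - α))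
          (Real.exp (-G v) * -((g ∘ c) v)) v := (((hG v).neg).exp).sub_const _
      have hlin : HasDerivAt (fun w : ℝ => Real.exp (w/ξ)) (Real.exp (v/ξ) * (1/ξ)) v :=
        ((hasDerivAt_id v).div_const ξ).exp
      have hmul := hE.mul hlin
      have hcv : (g ∘ c) v = g v := by rw [Function.comp_apply, hceq v hv]
      rw [hcv] at hmul
      refine hmul.congr_deriv ?_
      have h1 := hxE v hv
      have h2 : y v * Real.exp (-G v) * ξ = 2 * α := by
        rw [hyE v hv]; field_simp
      rw [hgdef]
      field_simp
      linear_combination (-Real.exp (v/ξ)) * h2 + (-Real.exp (v/ξ)) * h1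
    have hres := constant_of_has_deriv_right_zero
      (fun v hv => (hderiv v hv).continuousAt.continuousWithinAt)
      (fun v hv => (hderiv v (Set.Ico_subset_Icc_self hv)).hasDerivWithinAt) u hu
    rw [hres, hG0]
    simp
  have hTmem : T ∈ Set.Icc (0:ℝ) T := ⟨hT0, le_rfl⟩
  have hBT := hB T hTmem
  have hE : Real.exp (-G T) = 1 - α + α * Real.exp (-(T/ξ)) := by
    have h1 : Real.exp (-(T/ξ)) = (Real.exp (T/ξ))⁻¹ := Real.exp_neg _
    have h2 : Real.exp (T/ξ) ≠ 0 := (Real.exp_pos (T/ξ)).ne'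
    rw [h1]
    field_simp
    linear_combination hBT
  have hDpos : 0 < 1 - α + α * Real.exp (-(T/ξ)) := hE ▸ Real.exp_pos _
  refine ⟨hDpos, ?_, ?_⟩
  · rw [eq_div_iff hDpos.ne', ← hE]; exact hxE T hTmem
  · rw [eq_div_iff hDpos.ne', ← hE]; exact hyE T hTmem


/-- For the planar system `ẋ = x(y + (x+1)/ξ)`, `ẏ = y(y + (x+1)/ξ)` with initial
condition `(x,y)(0) = (−1−α, 2α/ξ)`, if `0 < α < 1` the (maximal forward) solution is
global and bounded and converges to `(−(1+α)/(1−α), 2α/(ξ(1−α)))`, while if `α ≥ 1`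
then `y` is unbounded on the maximal forward interval of existence. -/
theorem stmt_16 (ξ α : ℝ) (hξ : 0 < ξ) (hα : 0 < α)
    (b : EReal) (hb : 0 < b) (x y : ℝ → ℝ)
    (hsol : ∀ t : ℝ, 0 ≤ t → (t : EReal) < b →
      HasDerivAt x (x t * (y t + (x t + 1) / ξ)) t ∧
      HasDerivAt y (y t * (y t + (x t + 1) / ξ)) t)
    (hx0 : x 0 = -1 - α) (hy0 : y 0 = 2 * α / ξ)
    (hmax : ∀ b' : EReal, b < b' →
      ¬ ∃ x' y' : ℝ → ℝ,
        (∀ t : ℝ, 0 ≤ t → (t : EReal) < b' →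
          HasDerivAt x' (x' t * (y' t + (x' t + 1) / ξ)) t ∧
          HasDerivAt y' (y' t * (y' t + (x' t + 1) / ξ)) t) ∧
        (∀ t : ℝ, 0 ≤ t → (t : EReal) < b → x' t = x t ∧ y' t = y t)) :
    (α < 1 → b = ⊤ ∧
      (∃ C : ℝ, ∀ t : ℝ, 0 ≤ t → |x t| ≤ C ∧ |y t| ≤ C) ∧
      Tendsto (fun t => (x t, y t)) atTop
        (𝓝 ((-(1 + α) / (1 - α), 2 * α / (ξ * (1 - α))) : ℝ × ℝ))) ∧
    (1 ≤ α → ¬ ∃ C : ℝ, ∀ t : ℝ, 0 ≤ t → (t : EReal) < b → y t ≤ C) := by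
  have hξ' : ξ ≠ 0 := ne_of_gt hξ
  have key := aux_key ξ α hξ b x y hsol hx0 hy0
  have hnoext : ∀ b' : EReal,
      (∀ t : ℝ, 0 ≤ t → (t : EReal) < b' → 0 < 1 - α + α * Real.exp (-(t/ξ))) →
      ¬ b < b' := by
    intro b' hpos hbb'
    apply hmax b' hbb'
    refine ⟨fun s => (-1 - α) / (1 - α + α * Real.exp (-(s/ξ))),
            fun s => (2 * α / ξ) / (1 - α + α * Real.exp (-(s/ξ))), ?_, ?_⟩
    · intro t ht htb'
      have hDt := (hpos t ht htb').ne'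
      constructor
      · convert aux_ode1 ξ α (-1 - α) hξ' t hDt using 1
        exact aux_alg ξ α (-1 - α) _ hξ' hDt
      · convert aux_ode1 ξ α (2 * α / ξ) hξ' t hDt using 1
        exact aux_alg ξ α (2 * α / ξ) _ hξ' hDt
    · intro t ht htb
      obtain ⟨_, hxt, hyt⟩ := key t ht htb
      exact ⟨hxt.symm, hyt.symm⟩
  constructor
  · -- case α < 1
    intro hα1
    have h1α : (0:ℝ) < 1 - α := by linarith
    have hpos : ∀ t : ℝ, 0 ≤ t → 0 < 1 - α + α * Real.exp (-(t/ξ)) := by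
      intro t ht
      have := Real.exp_pos (-(t/ξ))
      nlinarith
    have hbtop : b = ⊤ := by
      by_contra h
      exact hnoext ⊤ (fun t ht _ => hpos t ht) (lt_top_iff_ne_top.mpr h)
    have key' : ∀ t : ℝ, 0 ≤ t →
        x t = (-1 - α) / (1 - α + α * Real.exp (-(t/ξ))) ∧
        y t = (2 * α / ξ) / (1 - α + α * Real.exp (-(t/ξ))) := by
      intro t ht
      obtain ⟨_, hxt, hyt⟩ := key t ht (by rw [hbtop]; exact EReal.coe_lt_top t)
      exact ⟨hxt, hyt⟩
    refine ⟨hbtop, ?_, ?_⟩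
    · -- boundedness
      refine ⟨(1 + α) / (1 - α) + (2 * α / ξ) / (1 - α), ?_⟩
      intro t ht
      obtain ⟨hxt, hyt⟩ := key' t ht
      have hD := hpos t ht
      have hDge : 1 - α ≤ 1 - α + α * Real.exp (-(t/ξ)) := by
        have := (Real.exp_pos (-(t/ξ))).le
        nlinarith
      have hy0pos : (0:ℝ) ≤ 2 * α / ξ := by positivity
      constructor
      · rw [hxt, abs_div, abs_of_pos hD, abs_of_neg (by linarith : (-1 - α : ℝ) < 0)]
        have hb1 : (1 + α) / (1 - α + α * Real.exp (-(t/ξ))) ≤ (1 + α) / (1 - α) := by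
          gcongr
        have : -(-1 - α) = 1 + α := by ring
        rw [this]
        have h2 : (0:ℝ) ≤ (2 * α / ξ) / (1 - α) := by positivity
        linarith
      · rw [hyt, abs_div, abs_of_pos hD, abs_of_nonneg hy0pos]
        have hb1 : (2 * α / ξ) / (1 - α + α * Real.exp (-(t/ξ))) ≤ (2 * α / ξ) / (1 - α) := by
          gcongr
        have h2 : (0:ℝ) ≤ (1 + α) / (1 - α) := by positivity
        linarith
    · -- convergence
      have hexp : Tendsto (fun t : ℝ => Real.exp (-(t/ξ))) atTop (𝓝 0) := by
        apply Real.tendsto_exp_atBot.comp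
        apply tendsto_neg_atTop_atBot.comp
        exact Tendsto.atTop_div_const hξ tendsto_id
      have hDlim : Tendsto (fun t : ℝ => 1 - α + α * Real.exp (-(t/ξ))) atTop (𝓝 (1 - α)) := by
        have := (hexp.const_mul α).const_add (1 - α)
        simpa using this
      have hxlim : Tendsto (fun t : ℝ => (-1 - α) / (1 - α + α * Real.exp (-(t/ξ)))) atTop
          (𝓝 ((-1 - α) / (1 - α))) := tendsto_const_nhds.div hDlim h1α.ne'
      have hylim : Tendsto (fun t : ℝ => (2 * α / ξ) / (1 - α + α * Real.exp (-(t/ξ)))) atTop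
          (𝓝 ((2 * α / ξ) / (1 - α))) := tendsto_const_nhds.div hDlim h1α.ne'
      have hlim := hxlim.prodMk_nhds hylim
      have heq : (fun t : ℝ => ((-1 - α) / (1 - α + α * Real.exp (-(t/ξ))),
          (2 * α / ξ) / (1 - α + α * Real.exp (-(t/ξ))))) =ᶠ[atTop]
          (fun t => (x t, y t)) := by
        filter_upwards [eventually_ge_atTop (0:ℝ)] with t ht
        obtain ⟨hxt, hyt⟩ := key' t ht
        rw [hxt, hyt]
      have hfin := hlim.congr' heq
      have hp1 : (-(1 + α)) / (1 - α) = (-1 - α) / (1 - α) := by ring_nf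
      have hp2 : 2 * α / (ξ * (1 - α)) = (2 * α / ξ) / (1 - α) := by
        rw [div_div]
      rw [hp1, hp2]
      exact hfin
  · -- case 1 ≤ α
    intro hα1
    rintro ⟨C, hC⟩
    have hy0pos : (0:ℝ) < 2 * α / ξ := by positivity
    have hC0 : 0 < C := lt_of_lt_of_le hy0pos (hy0 ▸ hC 0 le_rfl hb)
    set d : ℝ := min ((2 * α / ξ) / (2 * C)) 1 with hddef
    have hd0 : 0 < d := lt_min (by positivity) one_pos
    have hd1 : d ≤ 1 := min_le_right _ _
    -- τ q for q ∈ (0,1]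
    have hτ : ∀ q : ℝ, 0 < q → q ≤ 1 →
        0 ≤ -(ξ * Real.log ((q + α - 1) / α)) ∧
        Real.exp (-(-(ξ * Real.log ((q + α - 1) / α))/ξ)) = (q + α - 1) / α := by
      intro q hq0 hq1
      have hr0 : 0 < (q + α - 1) / α := by
        apply div_pos (by linarith) (by linarith)
      have hr1 : (q + α - 1) / α ≤ 1 := by
        rw [div_le_one (by linarith)]
        linarith
      constructor
      · have := Real.log_nonpos hr0.le hr1
        nlinarith
      · rw [show -(-(ξ * Real.log ((q + α - 1) / α))/ξ) = Real.log ((q + α - 1) / α) by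
          field_simp]
        exact Real.exp_log hr0
    obtain ⟨ht10, ht1e⟩ := hτ d hd0 hd1
    obtain ⟨ht20, ht2e⟩ := hτ (d/2) (by linarith) (by linarith)
    set t1 : ℝ := -(ξ * Real.log ((d + α - 1) / α)) with ht1def
    set t2 : ℝ := -(ξ * Real.log ((d/2 + α - 1) / α)) with ht2def
    have ht12 : t1 < t2 := by
      have hlog : Real.log ((d/2 + α - 1) / α) < Real.log ((d + α - 1) / α) := by
        apply Real.log_lt_log (by apply div_pos (by linarith) (by linarith))
        exact (div_lt_div_iff_of_pos_right (by linarith)).mpr (by linarith)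
      rw [ht1def, ht2def]
      nlinarith [mul_lt_mul_of_pos_left hlog hξ]
    -- t2 ≤ b
    have ht2b : (t2 : EReal) ≤ b := by
      by_contra h
      push_neg at h
      apply hnoext t2 ?_ h
      intro t ht htb
      have htlt : t < t2 := EReal.coe_lt_coe_iff.mp htb
      have hmono : Real.exp (-(t2/ξ)) < Real.exp (-(t/ξ)) := by
        apply Real.exp_lt_exp.mpr
        rw [neg_lt_neg_iff]
        exact (div_lt_div_iff_of_pos_right hξ).mpr htlt
      rw [ht2e] at hmono
      have h3 : d/2 + α - 1 < Real.exp (-(t/ξ)) * α :=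
        (div_lt_iff₀ (by linarith : (0:ℝ) < α)).mp hmono
      nlinarith [h3]
    have ht1b : (t1 : EReal) < b := lt_of_lt_of_le (EReal.coe_lt_coe_iff.mpr ht12) ht2b
    obtain ⟨hDpos, _, hyt1⟩ := key t1 ht10 ht1b
    have hDt1 : 1 - α + α * Real.exp (-(t1/ξ)) = d := by
      rw [ht1e]
      field_simp
      ring
    have hyval : y t1 = (2 * α / ξ) / d := by rw [hyt1, hDt1]
    have hdle : d ≤ (2 * α / ξ) / (2 * C) := min_le_left _ _
    have hylarge : C < y t1 := by
      rw [hyval]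
      rw [lt_div_iff₀ hd0]
      have : d * (2 * C) ≤ 2 * α / ξ := by
        rw [← le_div_iff₀ (by linarith : (0:ℝ) < 2 * C)]
        exact hdle
      nlinarith
    exact absurd (hC t1 ht10 ht1b) (not_le.mpr hylarge)
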